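/- Let f : R^N → R be convex, differentiable, and partially separable: f(x) = Σ_{J ∈ 𝒥} f_J(x) where each f_J is convex, differentiable, and depends only on blocks x^{(i)} for i ∈ J. Assume the block Lipschitz condition f(x + U_i t) ≤ f(x) + ⟨∇_i f(x), t⟩ + (L_i/2)‖t‖_{(i)}² for all x, i, t. Then for all x, h ∈ R^N, f(x+h) ≤ f(x) + ⟨∇f(x), h⟩ + (θ/2)‖h‖_L², where θ = max_{J∈𝒥} |J ∩ supp(h)| and supp(h) = {i : h^{(i)} ≠ 0}. -/

import Mathlib

open Finset
open scoped Classical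

/-- **Deterministic separable overapproximation (DSO).** Let `f = ∑_{J ∈ 𝒥} f_J` be
partially separable, with each `f_J` convex, differentiable and depending only on the
blocks `x⁽ⁱ⁾`, `i ∈ J`. Under the block Lipschitz condition
`f(x + Uᵢt) ≤ f(x) + ⟨∇ᵢf(x), t⟩ + (Lᵢ/2)‖t‖²`, for all `x, h`:
`f(x+h) ≤ f(x) + ⟨∇f(x), h⟩ + (θ/2)‖h‖_L²`, where
`θ = max_{J∈𝒥} |J ∩ supp(h)|` and `supp(h) = {i : h⁽ⁱ⁾ ≠ 0}`. -/
theorem dso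
    (n : ℕ) (E : Fin n → Type*) [∀ i, NormedAddCommGroup (E i)]
    [∀ i, NormedSpace ℝ (E i)]
    (L : Fin n → ℝ) (hL : ∀ i, 0 < L i)
    (ι : Type*) [Fintype ι] (J : ι → Finset (Fin n))
    (fJ : ι → (∀ i, E i) → ℝ)
    (hconv : ∀ a, ConvexOn ℝ Set.univ (fJ a))
    (hdiff : ∀ a, Differentiable ℝ (fJ a))
    (hdep : ∀ a, ∀ x y : ∀ i, E i, (∀ i ∈ J a, x i = y i) → fJ a x = fJ a y)
    (f : (∀ i, E i) → ℝ) (hf : f = fun x => ∑ a, fJ a x)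
    (hlip : ∀ (x : ∀ i, E i) (i : Fin n) (t : E i),
      f (x + Pi.single i t)
        ≤ f x + fderiv ℝ f x (Pi.single i t) + L i / 2 * ‖t‖ ^ 2)
    (x h : ∀ i, E i) :
    f (x + h) ≤ f x + fderiv ℝ f x h
      + ((univ.sup fun a => ((J a) ∩ (univ.filter fun i => h i ≠ 0)).card : ℕ) : ℝ) / 2
          * ∑ i, L i * ‖h i‖ ^ 2 := by
  classical
  set T : Finset (Fin n) := univ.filter fun i => h i ≠ 0 with hTdef
  set θ : ℕ := univ.sup fun a => ((J a) ∩ T).card with hθdef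
  have hmemT : ∀ i, i ∈ T ↔ h i ≠ 0 := by intro i; simp [hTdef]
  have hθa : ∀ a, ((J a) ∩ T).card ≤ θ := fun a => Finset.le_sup (f := fun a => ((J a) ∩ T).card) (mem_univ a)
  set c : Fin n → ℝ := fun i => fderiv ℝ f x (Pi.single i (h i)) with hcdef
  -- the gradient term decomposes over the support
  have hgrad : fderiv ℝ f x h = ∑ i ∈ T, c i := by
    conv_lhs => rw [← Finset.univ_sum_single h]
    rw [map_sum]
    refine (Finset.sum_subset (subset_univ T) ?_).symm
    intro i _ hiT
    have h0 : h i = 0 := by by_contra hne; exact hiT ((hmemT i).mpr hne)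
    simp [hcdef, h0]
  -- nonnegativity of the quadratic weights
  have hK : ∀ i, 0 ≤ L i * ‖h i‖ ^ 2 := fun i => mul_nonneg (hL i).le (by positivity)
  have hK2 : ∀ i, 0 ≤ L i / 2 * ‖h i‖ ^ 2 := fun i =>
    mul_nonneg (by linarith [hL i]) (by positivity)
  by_cases hθ0 : θ = 0
  · -- degenerate case : the support meets no `J a`
    have hJT : ∀ a, (J a) ∩ T = ∅ := by
      intro a
      exact Finset.card_eq_zero.mp (Nat.le_zero.mp (hθ0 ▸ hθa a))
    have hnotJ : ∀ a, ∀ i ∈ T, i ∉ J a := by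
      intro a i hiT hiJ
      have : i ∈ (J a) ∩ T := Finset.mem_inter.mpr ⟨hiJ, hiT⟩
      simp [hJT a] at this
    have hfx : f (x + h) = f x := by
      rw [hf]
      refine Finset.sum_congr rfl fun a _ => ?_
      refine hdep a _ _ fun i hi => ?_
      have h0 : h i = 0 := by
        by_contra hne
        exact hnotJ a i ((hmemT i).mpr hne) hi
      simp [h0]
    have hci : ∀ i ∈ T, 0 ≤ c i := by
      intro i hiT
      have hhi : h i ≠ 0 := (hmemT i).mp hiT
      have hKi : 0 < L i / 2 * ‖h i‖ ^ 2 := by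
        have : 0 < ‖h i‖ := norm_pos_iff.mpr hhi
        have := hL i
        positivity
      have hconst : ∀ t : E i, f (x + Pi.single i t) = f x := by
        intro t
        rw [hf]
        refine Finset.sum_congr rfl fun a _ => ?_
        refine hdep a _ _ fun j hj => ?_
        have hji : j ≠ i := fun hji => hnotJ a i hiT (hji ▸ hj)
        simp [Pi.single_eq_of_ne hji]
      have key : ∀ s : ℝ, 0 < s → 0 ≤ c i + s * (L i / 2 * ‖h i‖ ^ 2) := by
        intro s hs
        have h1 := hlip x i (s • h i)
        rw [hconst (s • h i)] at h1
        rw [Pi.single_smul, map_smul] at h1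
        have h3 : ‖s • h i‖ ^ 2 = s ^ 2 * ‖h i‖ ^ 2 := by
          rw [norm_smul, Real.norm_eq_abs, mul_pow, sq_abs]
        rw [h3] at h1
        simp only [smul_eq_mul, hcdef] at h1
        have h4 : s * 0 ≤ s * (c i + s * (L i / 2 * ‖h i‖ ^ 2)) := by
          simp only [hcdef]; nlinarith [h1]
        exact le_of_mul_le_mul_left h4 hs
      by_contra hneg
      push_neg at hneg
      have hs : 0 < -c i / (2 * (L i / 2 * ‖h i‖ ^ 2)) :=
        div_pos (by linarith) (by linarith)
      have hkey := key _ hs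
      have h2K : (2 * (L i / 2 * ‖h i‖ ^ 2)) ≠ 0 := ne_of_gt (by linarith)
      have hsK : -c i / (2 * (L i / 2 * ‖h i‖ ^ 2)) * (L i / 2 * ‖h i‖ ^ 2) = -c i / 2 := by
        rw [div_mul_eq_mul_div, div_eq_div_iff h2K (two_ne_zero)]
        ring
      rw [hsK] at hkey
      linarith
    rw [hfx, hgrad, hθ0]
    have h5 : 0 ≤ ∑ i ∈ T, c i := Finset.sum_nonneg hci
    have h6 : 0 ≤ ∑ i, L i * ‖h i‖ ^ 2 := Finset.sum_nonneg fun i _ => hK i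
    push_cast
    simp only [zero_div, zero_mul, add_zero]
    linarith
  · -- main case : `θ ≥ 1`
    have hθpos : 0 < θ := Nat.pos_of_ne_zero hθ0
    set θr : ℝ := (θ : ℝ) with hθrdef
    have hθr0 : 0 < θr := by rw [hθrdef]; exact_mod_cast hθpos
    have hθrne : θr ≠ 0 := ne_of_gt hθr0
    -- Jensen per summand
    have keyA : ∀ a, fJ a (x + h)
        ≤ (∑ i ∈ T, (1/θr) * fJ a (x + θr • Pi.single i (h i)))
          + (1 - (T.card : ℝ)/θr) * fJ a x := by
      intro a
      set S : Finset (Fin n) := (J a) ∩ T with hSdef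
      have hST : S ⊆ T := Finset.inter_subset_right
      have hScard : (S.card : ℝ) ≤ θr := by
        rw [hθrdef, hSdef]; exact_mod_cast hθa a
      have hnone : (none : Option (Fin n)) ∉ S.image some := by simp
      have hinj : ∀ b ∈ S, ∀ b' ∈ S, (some b : Option (Fin n)) = some b' → b = b' :=
        fun b _ b' _ hb => Option.some_injective _ hb
      set w : Option (Fin n) → ℝ :=
        fun o => Option.elim o (1 - (S.card : ℝ)/θr) (fun _ => 1/θr) with hwdef
      set p : Option (Fin n) → (∀ i, E i) :=
        fun o => Option.elim o x (fun i => x + θr • Pi.single i (h i)) with hpdef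
      have h₀ : ∀ o ∈ insert none (S.image some), 0 ≤ w o := by
        intro o _
        match o with
        | none =>
          simp only [hwdef, Option.elim]
          have : (S.card : ℝ)/θr ≤ 1 := (div_le_one hθr0).mpr hScard
          linarith
        | some i => simp only [hwdef, Option.elim]; positivity
      have h₁ : ∑ o ∈ insert none (S.image some), w o = 1 := by
        rw [Finset.sum_insert hnone, Finset.sum_image hinj]
        simp only [hwdef, Option.elim, Finset.sum_const, nsmul_eq_mul]
        field_simp; ring
      have hmem : ∀ o ∈ insert none (S.image some), p o ∈ (Set.univ : Set (∀ i, E i)) :=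
        fun o _ => Set.mem_univ _
      have hjen := (hconv a).map_sum_le h₀ h₁ hmem
      have hpt : ∑ o ∈ insert none (S.image some), w o • p o
          = x + ∑ i ∈ S, Pi.single i (h i) := by
        rw [Finset.sum_insert hnone, Finset.sum_image hinj]
        simp only [hwdef, hpdef, Option.elim]
        have e1 : ∀ i : Fin n, (1/θr) • (x + θr • Pi.single i (h i))
            = (1/θr) • x + Pi.single i (h i) := by
          intro i
          rw [smul_add, smul_smul, one_div_mul_cancel hθrne, one_smul]
        simp_rw [e1]
        rw [Finset.sum_add_distrib, Finset.sum_const, ← Nat.cast_smul_eq_nsmul ℝ, smul_smul,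
          ← add_assoc, ← add_smul]
        have : (1 - (S.card : ℝ)/θr) + (S.card : ℝ) * (1/θr) = 1 := by field_simp; ring
        rw [this, one_smul]
      have hLHS : fJ a (x + h) = fJ a (x + ∑ i ∈ S, Pi.single i (h i)) := by
        refine hdep a _ _ fun i hi => ?_
        simp only [Pi.add_apply, Finset.sum_apply, Finset.sum_pi_single]
        by_cases hhi : h i = 0
        · by_cases hiS : i ∈ S <;> simp [hhi, hiS]
        · have hiS : i ∈ S := Finset.mem_inter.mpr ⟨hi, (hmemT i).mpr hhi⟩
          simp [hiS]
      rw [hpt, ← hLHS] at hjen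
      have hRHS : ∑ o ∈ insert none (S.image some), w o • fJ a (p o)
          = (1 - (S.card : ℝ)/θr) * fJ a x
            + ∑ i ∈ S, (1/θr) * fJ a (x + θr • Pi.single i (h i)) := by
        rw [Finset.sum_insert hnone, Finset.sum_image hinj]
        simp only [hwdef, hpdef, Option.elim, smul_eq_mul]
      rw [hRHS] at hjen
      -- extend the sum from `S` to `T`
      have hext : ∑ i ∈ T, (1/θr) * fJ a (x + θr • Pi.single i (h i))
          = (∑ i ∈ S, (1/θr) * fJ a (x + θr • Pi.single i (h i)))
            + ((T.card : ℝ) - S.card)/θr * fJ a x := by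
        have hsd := Finset.sum_sdiff (f := fun i => (1/θr) * fJ a (x + θr • Pi.single i (h i))) hST
        have hval : ∀ i ∈ T \ S, (1/θr) * fJ a (x + θr • Pi.single i (h i))
            = (1/θr) * fJ a x := by
          intro i hi
          obtain ⟨hiT, hiS⟩ := Finset.mem_sdiff.mp hi
          have hiJ : i ∉ J a := fun hiJ => hiS (Finset.mem_inter.mpr ⟨hiJ, hiT⟩)
          congr 1
          refine hdep a _ _ fun j hj => ?_
          have hji : j ≠ i := fun e => hiJ (e ▸ hj)
          simp [Pi.single_eq_of_ne hji]
        rw [← hsd, Finset.sum_congr rfl hval, Finset.sum_const, nsmul_eq_mul,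
          Finset.card_sdiff_of_subset hST]
        have hcast : ((T.card - S.card : ℕ) : ℝ) = (T.card : ℝ) - S.card :=
          Nat.cast_sub (Finset.card_le_card hST)
        rw [hcast]; ring
      rw [hext]
      have hco : ((T.card : ℝ) - S.card)/θr * fJ a x + (1 - (T.card : ℝ)/θr) * fJ a x
          = (1 - (S.card : ℝ)/θr) * fJ a x := by ring
      linarith [hjen, hco]
    -- sum over the summands
    have hsum1 : f (x + h) ≤ (∑ i ∈ T, (1/θr) * f (x + θr • Pi.single i (h i)))
        + (1 - (T.card : ℝ)/θr) * f x := by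
      rw [hf]
      simp only
      calc ∑ a, fJ a (x + h)
          ≤ ∑ a, ((∑ i ∈ T, (1/θr) * fJ a (x + θr • Pi.single i (h i)))
              + (1 - (T.card : ℝ)/θr) * fJ a x) := Finset.sum_le_sum fun a _ => keyA a
        _ = (∑ i ∈ T, (1/θr) * ∑ a, fJ a (x + θr • Pi.single i (h i)))
              + (1 - (T.card : ℝ)/θr) * ∑ a, fJ a x := by
            rw [Finset.sum_add_distrib, ← Finset.mul_sum, Finset.sum_comm]
            congr 1
            exact Finset.sum_congr rfl fun i _ => (Finset.mul_sum _ _ _).symm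
    -- block Lipschitz bound for each support coordinate
    have hlip2 : ∀ i ∈ T, (1/θr) * f (x + θr • Pi.single i (h i))
        ≤ (1/θr) * f x + c i + θr * (L i / 2 * ‖h i‖ ^ 2) := by
      intro i _
      have h1 := hlip x i (θr • h i)
      rw [Pi.single_smul, map_smul] at h1
      have h3 : ‖θr • h i‖ ^ 2 = θr ^ 2 * ‖h i‖ ^ 2 := by
        rw [norm_smul, Real.norm_eq_abs, mul_pow, sq_abs]
      rw [h3] at h1
      simp only [smul_eq_mul, hcdef] at h1
      have h2 := mul_le_mul_of_nonneg_left h1 (le_of_lt (one_div_pos.mpr hθr0))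
      calc (1/θr) * f (x + θr • Pi.single i (h i))
          ≤ (1/θr) * (f x + θr * fderiv ℝ f x (Pi.single i (h i))
              + L i / 2 * (θr ^ 2 * ‖h i‖ ^ 2)) := h2
        _ = (1/θr) * f x + c i + θr * (L i / 2 * ‖h i‖ ^ 2) := by
            simp only [hcdef]; field_simp
    have hsum2 : ∑ i ∈ T, (1/θr) * f (x + θr • Pi.single i (h i))
        ≤ (T.card : ℝ)/θr * f x + (∑ i ∈ T, c i)
          + θr * ∑ i ∈ T, (L i / 2 * ‖h i‖ ^ 2) := by
      calc ∑ i ∈ T, (1/θr) * f (x + θr • Pi.single i (h i))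
          ≤ ∑ i ∈ T, ((1/θr) * f x + c i + θr * (L i / 2 * ‖h i‖ ^ 2)) :=
            Finset.sum_le_sum hlip2
        _ = _ := by
            rw [Finset.sum_add_distrib, Finset.sum_add_distrib, Finset.sum_const,
              nsmul_eq_mul, ← Finset.mul_sum]
            ring
    have hTsub : ∑ i ∈ T, (L i / 2 * ‖h i‖ ^ 2) ≤ ∑ i, (L i / 2 * ‖h i‖ ^ 2) :=
      Finset.sum_le_sum_of_subset_of_nonneg (subset_univ T) fun i _ _ => hK2 i
    have hquad : θr * ∑ i ∈ T, (L i / 2 * ‖h i‖ ^ 2) ≤ θr/2 * ∑ i, L i * ‖h i‖ ^ 2 := by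
      have h5 : ∑ i, (L i / 2 * ‖h i‖ ^ 2) = (1/2) * ∑ i, L i * ‖h i‖ ^ 2 := by
        rw [Finset.mul_sum]
        exact Finset.sum_congr rfl fun i _ => by ring
      calc θr * ∑ i ∈ T, (L i / 2 * ‖h i‖ ^ 2)
          ≤ θr * ∑ i, (L i / 2 * ‖h i‖ ^ 2) :=
            mul_le_mul_of_nonneg_left hTsub hθr0.le
        _ = θr/2 * ∑ i, L i * ‖h i‖ ^ 2 := by rw [h5]; ring
    have hcancel : (T.card : ℝ)/θr * f x + (1 - (T.card : ℝ)/θr) * f x = f x := by ring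
    rw [hgrad]
    linarith [hsum1, hsum2, hquad, hcancel]
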